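/- Let μ_1, ..., μ_N be a partition of unity on a manifold M, ν_j = Σ_{i≤j} μ_i, and define H_1 : M × Δ^q → M × Δ^q on the simplex Δ^q = {0 ≤ t_1 ≤ ... ≤ t_q ≤ 1} by H_1(x, t) = (x, u) where u_i(x, t) = ν_{⌊Nt_i⌋}(x) + μ_{⌊Nt_i⌋+1}(x)(Nt_i − ⌊Nt_i⌋). Then H_1 is well-defined (each u lies in Δ^q), continuous, and commutes with the face inclusions d_i : Δ^{q-1} → Δ^q in the sense that H_1 ∘ (id_M × d_i) = (id_M × d_i) ∘ H_1. -/

import Mathlib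

/-- The model of the `q`-simplex `{0 ≤ t 0 ≤ t 1 ≤ ⋯ ≤ 1}` with ordered coordinates. -/
def orderedSimplex (q : ℕ) : Set (Fin q → ℝ) :=
  {t | Monotone t ∧ ∀ i, t i ∈ Set.Icc (0 : ℝ) 1}

/-- `μ'_m`, the `m`-th partition of unity function (`0`-indexed), extended by `0`. -/
noncomputable def muExt {M : Type} [TopologicalSpace M] {N : ℕ} (μ : Fin N → C(M, ℝ))
    (m : ℕ) (x : M) : ℝ :=
  if h : m < N then μ ⟨m, h⟩ x else 0

/-- `ν_m = μ_1 + ⋯ + μ_m`, the partial sums of the partition of unity. -/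
noncomputable def nuSum {M : Type} [TopologicalSpace M] {N : ℕ} (μ : Fin N → C(M, ℝ))
    (m : ℕ) (x : M) : ℝ :=
  ∑ i ∈ Finset.range m, muExt μ i x

/-- The coordinate function of Thurston's fragmentation map:
`u(x, s) = ν_{⌊Ns⌋}(x) + μ_{⌊Ns⌋+1}(x) · (Ns - ⌊Ns⌋)`. -/
noncomputable def fragCoord {M : Type} [TopologicalSpace M] {N : ℕ} (μ : Fin N → C(M, ℝ))
    (x : M) (s : ℝ) : ℝ :=
  nuSum μ ⌊(N : ℝ) * s⌋₊ x + muExt μ ⌊(N : ℝ) * s⌋₊ x * ((N : ℝ) * s - ⌊(N : ℝ) * s⌋₊)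

/-- Thurston's fragmentation map `H₁ : M × Δ^q → M × Δ^q`, `H₁(x,t) = (x, u(x,t))`. -/
noncomputable def fragMap {M : Type} [TopologicalSpace M] {N : ℕ} (μ : Fin N → C(M, ℝ))
    (q : ℕ) : M × (Fin q → ℝ) → M × (Fin q → ℝ) :=
  fun p => (p.1, fun i => fragCoord μ p.1 (p.2 i))

/-- Extension of the coordinates of a point of the `q`-simplex by `0` below and `1` above,
used to write all the face inclusions by one formula. -/
noncomputable def extCoord (q : ℕ) (t : Fin q → ℝ) (m : ℤ) : ℝ :=
  if m < 0 then 0 else if h : m.toNat < q then t ⟨m.toNat, h⟩ else 1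

/-- The `i`-th face inclusion `d_i : Δ^q → Δ^{q+1}` in ordered coordinates (inserting `0`,
duplicating a coordinate, or appending `1`). -/
noncomputable def simplexFace (q : ℕ) (i : Fin (q + 2)) (t : Fin q → ℝ) :
    Fin (q + 1) → ℝ :=
  fun j => if ((j : ℕ) : ℤ) < ((i : ℕ) : ℤ) then extCoord q t ((j : ℕ) : ℤ)
    else extCoord q t (((j : ℕ) : ℤ) - 1)

section Aux

variable {M : Type} [TopologicalSpace M] {N : ℕ} (μ : Fin N → C(M, ℝ))

lemma muExt_nonneg (hpos : ∀ i x, 0 ≤ μ i x) (m : ℕ) (x : M) : 0 ≤ muExt μ m x := by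
  unfold muExt; split
  · exact hpos _ x
  · exact le_refl 0

lemma muExt_eq_zero (m : ℕ) (hm : N ≤ m) (x : M) : muExt μ m x = 0 := by
  unfold muExt; rw [dif_neg (by omega)]

lemma nuSum_mono (hpos : ∀ i x, 0 ≤ μ i x) (x : M) : Monotone fun m => nuSum μ m x := by
  intro a b hab
  exact Finset.sum_le_sum_of_subset_of_nonneg (Finset.range_subset_range.2 hab)
    (fun i _ _ => muExt_nonneg μ hpos i x)

lemma nuSum_N (hsum : ∀ x : M, ∑ i, μ i x = 1) (x : M) : nuSum μ N x = 1 := by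
  unfold nuSum
  rw [← Fin.sum_univ_eq_sum_range (fun i => muExt μ i x) N, ← hsum x]
  refine Finset.sum_congr rfl fun i _ => ?_
  simp [muExt, i.isLt]

lemma nuSum_of_N_le (hsum : ∀ x : M, ∑ i, μ i x = 1) {m : ℕ} (hm : N ≤ m) (x : M) :
    nuSum μ m x = 1 := by
  have h : nuSum μ m x = nuSum μ N x + ∑ i ∈ Finset.Ico N m, muExt μ i x := by
    unfold nuSum
    rw [Finset.range_eq_Ico, ← Finset.sum_Ico_consecutive _ (Nat.zero_le N) hm, Finset.range_eq_Ico]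
  rw [h, nuSum_N μ hsum x,
    Finset.sum_eq_zero fun i hi => muExt_eq_zero μ i (Finset.mem_Ico.1 hi).1 x, add_zero]

lemma frag_eq_sum (hsum : ∀ x : M, ∑ i, μ i x = 1) (x : M) {y : ℝ} (hy : 0 ≤ y) :
    nuSum μ ⌊y⌋₊ x + muExt μ ⌊y⌋₊ x * (y - ⌊y⌋₊) =
      ∑ i ∈ Finset.range N, muExt μ i x * (min (max (y - i) 0) 1) := by
  set m := ⌊y⌋₊ with hm
  have h1 : (m : ℝ) ≤ y := Nat.floor_le hy
  have h2 : y < m + 1 := Nat.lt_floor_add_one y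
  rcases lt_or_ge m N with hmN | hmN
  · rw [Finset.range_eq_Ico, ← Finset.sum_Ico_consecutive _ (Nat.zero_le m) hmN.le,
      Finset.sum_eq_sum_Ico_succ_bot hmN]
    have e1 : ∑ i ∈ Finset.Ico 0 m, muExt μ i x * (min (max (y - i) 0) 1) = nuSum μ m x := by
      rw [nuSum, Finset.range_eq_Ico]
      refine Finset.sum_congr rfl fun i hi => ?_
      have hi' : (i : ℝ) + 1 ≤ m := by
        have := (Finset.mem_Ico.1 hi).2
        exact_mod_cast this
      have : min (max (y - i) 0) 1 = 1 := by
        rw [max_eq_left (by linarith), min_eq_right (by linarith)]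
      rw [this, mul_one]
    have e2 : min (max (y - m) 0) 1 = y - m := by
      rw [max_eq_left (by linarith), min_eq_left (by linarith)]
    have e3 : ∑ i ∈ Finset.Ico (m + 1) N, muExt μ i x * (min (max (y - i) 0) 1) = 0 := by
      refine Finset.sum_eq_zero fun i hi => ?_
      have hi' : (m : ℝ) + 1 ≤ i := by
        have := (Finset.mem_Ico.1 hi).1
        exact_mod_cast this
      rw [max_eq_right (by linarith), min_eq_left zero_le_one, mul_zero]
    rw [e1, e2, e3, add_zero]
  · rw [muExt_eq_zero μ m hmN x, zero_mul, add_zero, nuSum_of_N_le μ hsum hmN x]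
    have key : ∀ i ∈ Finset.range N, muExt μ i x * (min (max (y - i) 0) 1) = muExt μ i x := by
      intro i hi
      have hle : i + 1 ≤ m := Nat.succ_le_of_lt (lt_of_lt_of_le (Finset.mem_range.1 hi) hmN)
      have hi' : (i : ℝ) + 1 ≤ m := by exact_mod_cast hle
      rw [max_eq_left (by linarith), min_eq_right (by linarith), mul_one]
    rw [Finset.sum_congr rfl key]
    exact (nuSum_N μ hsum x).symm

lemma fragCoord_eq_sum (hsum : ∀ x : M, ∑ i, μ i x = 1) (x : M) {s : ℝ} (hs : 0 ≤ s) :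
    fragCoord μ x s = ∑ i ∈ Finset.range N, muExt μ i x * (min (max ((N : ℝ) * s - i) 0) 1) :=
  frag_eq_sum μ hsum x (by positivity)

lemma fragCoord_zero : fragCoord μ x 0 = 0 := by
  simp [fragCoord, nuSum]

lemma fragCoord_one (hsum : ∀ x : M, ∑ i, μ i x = 1) (x : M) : fragCoord μ x 1 = 1 := by
  unfold fragCoord
  rw [mul_one, Nat.floor_natCast, nuSum_N μ hsum x, muExt_eq_zero μ N le_rfl x, zero_mul,
    add_zero]

lemma fragCoord_mono (hpos : ∀ i x, 0 ≤ μ i x) (hsum : ∀ x : M, ∑ i, μ i x = 1) (x : M)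
    {a b : ℝ} (ha : 0 ≤ a) (hab : a ≤ b) : fragCoord μ x a ≤ fragCoord μ x b := by
  rw [fragCoord_eq_sum μ hsum x ha, fragCoord_eq_sum μ hsum x (ha.trans hab)]
  refine Finset.sum_le_sum fun i _ => ?_
  refine mul_le_mul_of_nonneg_left ?_ (muExt_nonneg μ hpos i x)
  have : (N : ℝ) * a ≤ (N : ℝ) * b := by
    exact mul_le_mul_of_nonneg_left hab (by positivity)
  exact min_le_min (max_le_max (by linarith) le_rfl) le_rfl

lemma fragCoord_nonneg (hpos : ∀ i x, 0 ≤ μ i x) (hsum : ∀ x : M, ∑ i, μ i x = 1) (x : M)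
    {s : ℝ} (hs : 0 ≤ s) : 0 ≤ fragCoord μ x s := by
  rw [fragCoord_eq_sum μ hsum x hs]
  refine Finset.sum_nonneg fun i _ => mul_nonneg (muExt_nonneg μ hpos i x) ?_
  exact le_min (le_max_right _ 0) zero_le_one

lemma fragCoord_le_one (hpos : ∀ i x, 0 ≤ μ i x) (hsum : ∀ x : M, ∑ i, μ i x = 1) (x : M)
    {s : ℝ} (hs : 0 ≤ s) : fragCoord μ x s ≤ 1 := by
  rw [fragCoord_eq_sum μ hsum x hs]
  calc ∑ i ∈ Finset.range N, muExt μ i x * (min (max ((N : ℝ) * s - i) 0) 1)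
      ≤ ∑ i ∈ Finset.range N, muExt μ i x := by
        refine Finset.sum_le_sum fun i _ => ?_
        calc muExt μ i x * (min (max ((N : ℝ) * s - i) 0) 1) ≤ muExt μ i x * 1 :=
              mul_le_mul_of_nonneg_left (min_le_right _ 1) (muExt_nonneg μ hpos i x)
          _ = muExt μ i x := mul_one _
    _ = 1 := nuSum_N μ hsum x

end Aux


section Aux2
variable {M : Type} [TopologicalSpace M] {N : ℕ} (μ : Fin N → C(M, ℝ))

lemma fragCoord_extCoord (hsum : ∀ x : M, ∑ i, μ i x = 1) (x : M) (q : ℕ) (t : Fin q → ℝ)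
    (m : ℤ) :
    fragCoord μ x (extCoord q t m) = extCoord q (fun j => fragCoord μ x (t j)) m := by
  unfold extCoord
  split_ifs with h1 h2
  · exact fragCoord_zero μ
  · rfl
  · exact fragCoord_one μ hsum x

lemma frag_continuous :
    Continuous fun p : M × ℝ =>
      ∑ i ∈ Finset.range N, muExt μ i p.1 * min (max (p.2 - i) 0) 1 := by
  refine continuous_finset_sum _ fun i _ => Continuous.mul ?_ ?_
  · by_cases h : i < N
    · have : (fun p : M × ℝ => muExt μ i p.1) = fun p => μ ⟨i, h⟩ p.1 := by
        funext p; simp [muExt, h]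
      rw [this]
      exact (μ ⟨i, h⟩).continuous.comp continuous_fst
    · have : (fun p : M × ℝ => muExt μ i p.1) = fun _ => (0 : ℝ) := by
        funext p; simp [muExt, h]
      rw [this]; exact continuous_const
  · exact (((continuous_snd.sub continuous_const).max continuous_const).min continuous_const)

end Aux2

/-- Given a partition of unity `μ_1, …, μ_N` on `M`, the fragmentation map
`H₁(x,t) = (x, u(x,t))` with `u_i(x,t) = ν_{⌊Nt_i⌋}(x) + μ_{⌊Nt_i⌋+1}(x)(Nt_i − ⌊Nt_i⌋)` is
well defined (maps the simplex to itself), continuous, and commutes with all face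
inclusions `d_i : Δ^q → Δ^{q+1}`. -/
theorem fragMap_wellDefined_continuous_commutes_faces {M : Type} [TopologicalSpace M]
    (N : ℕ) (μ : Fin N → C(M, ℝ)) (hpos : ∀ i x, 0 ≤ μ i x)
    (hsum : ∀ x : M, ∑ i, μ i x = 1) (q : ℕ) :
    (∀ (x : M), ∀ t ∈ orderedSimplex q,
        (fun i => fragCoord μ x (t i)) ∈ orderedSimplex q) ∧
    ContinuousOn (fragMap μ q) (Set.univ ×ˢ orderedSimplex q) ∧
    (∀ (i : Fin (q + 2)) (x : M), ∀ t ∈ orderedSimplex q,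
        (fun j => fragCoord μ x (simplexFace q i t j)) =
          simplexFace q i fun j' => fragCoord μ x (t j')) := by
  refine ⟨?_, ?_, ?_⟩
  · intro x t ht
    obtain ⟨hmono, hbd⟩ := ht
    refine ⟨fun i j hij => fragCoord_mono μ hpos hsum x (hbd i).1 (hmono hij), fun i =>
      ⟨fragCoord_nonneg μ hpos hsum x (hbd i).1, fragCoord_le_one μ hpos hsum x (hbd i).1⟩⟩
  · have hF : Continuous fun p : M × (Fin q → ℝ) =>
        (p.1, fun i => ∑ j ∈ Finset.range N,
          muExt μ j p.1 * min (max ((N : ℝ) * p.2 i - j) 0) 1) := by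
      refine continuous_fst.prodMk (continuous_pi fun i => ?_)
      exact (frag_continuous μ).comp
        (continuous_fst.prodMk (continuous_const.mul ((continuous_apply i).comp continuous_snd)))
    refine ContinuousOn.congr hF.continuousOn ?_
    intro p hp
    have hp2 : p.2 ∈ orderedSimplex q := hp.2
    refine Prod.ext rfl ?_
    funext i
    exact fragCoord_eq_sum μ hsum p.1 (hp2.2 i).1
  · intro i x t _ht
    funext j
    simp only [simplexFace]
    split_ifs with h
    · exact fragCoord_extCoord μ hsum x q t _
    · exact fragCoord_extCoord μ hsum x q t _
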